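/- No monotone Condorcet consistent tournament rule on n ≥ 3 agents is 2-NM_λ for any λ < 1. -/

import Mathlib

open Classical Finset

structure Tournament (n : ℕ) where
  beats : Fin n → Fin n → Prop
  irrefl : ∀ i, ¬ beats i i
  total : ∀ i j, i ≠ j → (beats i j ↔ ¬ beats j i)

/-- `r` maps each tournament to a probability distribution over the agents. -/
def IsProbRule {n : ℕ} (r : Tournament n → Fin n → ℝ) : Prop :=
  ∀ T, (∀ i, 0 ≤ r T i) ∧ ∑ i, r T i = 1

/-- `T` and `T'` agree on all matches except possibly the one between `i` and `j`. -/
def Adjacent {n : ℕ} (i j : Fin n) (T T' : Tournament n) : Prop :=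
  ∀ a b, ¬((a = i ∧ b = j) ∨ (a = j ∧ b = i)) → (T.beats a b ↔ T'.beats a b)

def CondorcetConsistent {n : ℕ} (r : Tournament n → Fin n → ℝ) : Prop :=
  ∀ T i, (∀ j, j ≠ i → T.beats i j) → r T i = 1

def MonotoneRule {n : ℕ} (r : Tournament n → Fin n → ℝ) : Prop :=
  ∀ i j (T T' : Tournament n), i ≠ j → Adjacent i j T T' → T ≠ T' →
    T.beats i j → r T' i ≤ r T i

/-- 2-NM_λ-α. -/
def TwoNM {n : ℕ} (lam alpha : ℝ) (r : Tournament n → Fin n → ℝ) : Prop :=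
  ∀ i j (T T' : Tournament n), i ≠ j → Adjacent i j T T' → T ≠ T' →
    r T' i + r T' j ≤
      r T i + r T j + lam * max (r T i - r T' i) (r T j - r T' j) + alpha
set_option maxHeartbeats 1000000

def mkT (n : ℕ) (P : Fin n → Fin n → Prop)
    (hP : ∀ i j, P i j → P j i) : Tournament n where
  beats i j := i ≠ j ∧ (i.val < j.val ↔ ¬ P i j)
  irrefl i := fun h => h.1 rfl
  total i j hij := by
    have hv : i.val ≠ j.val := fun hv => hij (Fin.ext hv)
    have hji : j ≠ i := hij.symm
    by_cases hp : P i j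
    · have hp2 := hP i j hp
      simp only [hij, hji, hp, hp2, not_true, iff_false, ne_eq,
        not_false_eq_true, true_and, not_and, not_not]
      omega
    · have hp2 : ¬ P j i := fun h => hp (hP j i h)
      simp only [hij, hji, hp, hp2, not_false_eq_true, iff_true, ne_eq,
        true_and, not_and]
      omega

lemma mkT_beats {n : ℕ} (P : Fin n → Fin n → Prop) (hP : ∀ i j, P i j → P j i)
    (i j : Fin n) : (mkT n P hP).beats i j ↔ i ≠ j ∧ (i.val < j.val ↔ ¬ P i j) :=
  Iff.rfl

lemma zero_of_one {n : ℕ} {r : Tournament n → Fin n → ℝ} (hr : IsProbRule r)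
    {T : Tournament n} {j i : Fin n} (h1 : r T j = 1) (hij : i ≠ j) : r T i = 0 := by
  obtain ⟨hpos, hsum⟩ := hr T
  have h := Finset.sum_eq_sum_sdiff_singleton_add (Finset.mem_univ j) (r T)
  have hz : ∑ k ∈ univ \ {j}, r T k = 0 := by rw [h, h1] at hsum; linarith
  exact (Finset.sum_eq_zero_iff_of_nonneg (fun k _ => hpos k)).mp hz i (by simp [hij])

def flipP {n : ℕ} (x y : Fin n) (i j : Fin n) : Prop :=
  (i = x ∧ j = y) ∨ (i = y ∧ j = x)

theorem stmt1 {n : ℕ} (hn : 3 ≤ n) (lam : ℝ) (hlam0 : 0 ≤ lam) (hlam : lam < 1)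
    (r : Tournament n → Fin n → ℝ) (hr : IsProbRule r)
    (hcc : CondorcetConsistent r) (hmono : MonotoneRule r) :
    ¬ TwoNM lam 0 r := by
  intro hnm
  set a : Fin n := ⟨0, by omega⟩ with ha
  set b : Fin n := ⟨1, by omega⟩ with hb
  set c : Fin n := ⟨2, by omega⟩ with hc
  have hab : a ≠ b := Fin.ne_of_val_ne (by norm_num)
  have hac : a ≠ c := Fin.ne_of_val_ne (by norm_num)
  have hbc : b ≠ c := Fin.ne_of_val_ne (by norm_num)
  have ha0 : a.val = 0 := rfl
  have hb1 : b.val = 1 := rfl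
  have hc2 : c.val = 2 := rfl
  -- tournaments
  have symAC : ∀ i j : Fin n, flipP a c i j → flipP a c j i := by unfold flipP; tauto
  have symB : ∀ i j : Fin n, (flipP a c i j ∨ flipP a b i j) →
      (flipP a c j i ∨ flipP a b j i) := by unfold flipP; tauto
  have symC : ∀ i j : Fin n, (flipP a c i j ∨ flipP b c i j) →
      (flipP a c j i ∨ flipP b c j i) := by unfold flipP; tauto
  set T1 : Tournament n := mkT n (flipP a c) symAC with hT1
  set Ta : Tournament n := mkT n (fun _ _ => False) (by tauto) with hTa
  set Tb : Tournament n := mkT n (fun i j => flipP a c i j ∨ flipP a b i j) symB with hTb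
  set Tc : Tournament n := mkT n (fun i j => flipP a c i j ∨ flipP b c i j) symC with hTc
  -- Condorcet wins
  have hwa : r Ta a = 1 := by
    apply hcc
    intro j hj
    refine ⟨Ne.symm hj, ?_⟩
    have : j.val ≠ 0 := fun h => hj (Fin.ext h)
    simp only [not_false_eq_true, iff_true]
    omega
  have hwb : r Tb b = 1 := by
    apply hcc
    intro j hj
    refine ⟨Ne.symm hj, ?_⟩
    have hj1 : j.val ≠ 1 := fun h => hj (Fin.ext h)
    by_cases hja : j = a
    · subst hja
      have hP : flipP a c b a ∨ flipP a b b a := Or.inr (Or.inr ⟨rfl, rfl⟩)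
      simp only [hP, not_true, iff_false, not_lt]
      omega
    · have hj0 : j.val ≠ 0 := fun h => hja (Fin.ext h)
      have hP : ¬ (flipP a c b j ∨ flipP a b b j) := by
        unfold flipP
        rintro ((⟨h1, -⟩ | ⟨h1, -⟩) | (⟨h1, -⟩ | ⟨-, h2⟩))
        · exact hab h1.symm
        · exact hbc h1
        · exact hab h1.symm
        · exact hja h2
      simp only [hP, not_false_eq_true, iff_true]
      omega
  have hwc : r Tc c = 1 := by
    apply hcc
    intro j hj
    refine ⟨Ne.symm hj, ?_⟩
    have hj2 : j.val ≠ 2 := fun h => hj (Fin.ext h)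
    by_cases hja : j = a
    · subst hja
      have hP : flipP a c c a ∨ flipP b c c a := Or.inl (Or.inr ⟨rfl, rfl⟩)
      simp only [hP, not_true, iff_false, not_lt]
      omega
    · by_cases hjb : j = b
      · subst hjb
        have hP : flipP a c c b ∨ flipP b c c b := Or.inr (Or.inr ⟨rfl, rfl⟩)
        simp only [hP, not_true, iff_false, not_lt]
        omega
      · have hj0 : j.val ≠ 0 := fun h => hja (Fin.ext h)
        have hj1 : j.val ≠ 1 := fun h => hjb (Fin.ext h)
        have hP : ¬ (flipP a c c j ∨ flipP b c c j) := by
          unfold flipP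
          rintro ((⟨h1, -⟩ | ⟨-, h2⟩) | (⟨h1, -⟩ | ⟨-, h2⟩))
          · exact hac h1.symm
          · exact hja h2
          · exact hbc h1.symm
          · exact hjb h2
        simp only [hP, not_false_eq_true, iff_true]
        omega
  -- adjacency
  have adjB : Adjacent b a T1 Tb := by
    intro x y hxy
    constructor
    · rintro ⟨h1, h2⟩
      refine ⟨h1, ?_⟩
      rw [h2]
      constructor
      · intro h h'
        rcases h' with h' | h'
        · exact h h'
        · exact hxy (by unfold flipP at h'; tauto)
      · intro h h'
        exact h (Or.inl h')
    · rintro ⟨h1, h2⟩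
      refine ⟨h1, ?_⟩
      rw [h2]
      constructor
      · intro h h'
        exact h (Or.inl h')
      · intro h h'
        rcases h' with h' | h'
        · exact h h'
        · exact hxy (by unfold flipP at h'; tauto)
  have adjC : Adjacent c b T1 Tc := by
    intro x y hxy
    constructor
    · rintro ⟨h1, h2⟩
      refine ⟨h1, ?_⟩
      rw [h2]
      constructor
      · intro h h'
        rcases h' with h' | h'
        · exact h h'
        · exact hxy (by unfold flipP at h'; tauto)
      · intro h h'
        exact h (Or.inl h')
    · rintro ⟨h1, h2⟩
      refine ⟨h1, ?_⟩
      rw [h2]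
      constructor
      · intro h h'
        exact h (Or.inl h')
      · intro h h'
        rcases h' with h' | h'
        · exact h h'
        · exact hxy (by unfold flipP at h'; tauto)
  have adjA : Adjacent a c T1 Ta := by
    intro x y hxy
    have hP : ¬ flipP a c x y := fun h => hxy (by unfold flipP at h; tauto)
    constructor
    · rintro ⟨h1, h2⟩
      exact ⟨h1, by rw [h2]; simp [hP]⟩
    · rintro ⟨h1, h2⟩
      refine ⟨h1, by rw [h2]; simp [hP]⟩
  -- inequality facts
  have h01 : (0:ℕ) < 1 := by norm_num
  -- distinctness of tournaments via a distinguishing match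
  have hT1ab : T1.beats a b := by
    refine ⟨hab, ?_⟩
    have hP : ¬ flipP a c a b := by unfold flipP; rintro (⟨-, h⟩ | ⟨h, -⟩); exacts [hbc h, hac h]
    simp only [hP, not_false_eq_true, iff_true]; exact h01
  have hTbab : ¬ Tb.beats a b := by
    rintro ⟨-, h2⟩
    have hP : flipP a c a b ∨ flipP a b a b := Or.inr (Or.inl ⟨rfl, rfl⟩)
    exact (h2.mp h01) hP
  have hneB : T1 ≠ Tb := fun h => hTbab (h ▸ hT1ab)
  have hT1bc : T1.beats b c := by
    refine ⟨hbc, ?_⟩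
    have hP : ¬ flipP a c b c := by unfold flipP; rintro (⟨h, -⟩ | ⟨h, -⟩); exacts [hab h.symm, hbc h]
    simp only [hP, not_false_eq_true, iff_true]; norm_num
  have hTcbc : ¬ Tc.beats b c := by
    rintro ⟨-, h2⟩
    have hP : flipP a c b c ∨ flipP b c b c := Or.inr (Or.inl ⟨rfl, rfl⟩)
    exact (h2.mp (by norm_num)) hP
  have hneC : T1 ≠ Tc := fun h => hTcbc (h ▸ hT1bc)
  have hT1ca : T1.beats c a := by
    refine ⟨Ne.symm hac, ?_⟩
    have hP : flipP a c c a := Or.inr ⟨rfl, rfl⟩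
    simp only [hP, not_true, iff_false, not_lt]
    show a.val ≤ c.val
    exact Nat.le_of_lt (by norm_num)
  have hTaca : ¬ Ta.beats c a := by
    rintro ⟨-, h2⟩
    have hlt : c.val < a.val := h2.mpr (fun h => h)
    have : (2:ℕ) < 0 := hlt
    omega
  have hneA : T1 ≠ Ta := fun h => hTaca (h ▸ hT1ca)
  -- zero probabilities
  have hza : r Tb a = 0 := zero_of_one hr hwb hab
  have hzb : r Tc b = 0 := zero_of_one hr hwc hbc
  have hzc : r Ta c = 0 := zero_of_one hr hwa (Ne.symm hac)
  -- bounds on r T1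
  obtain ⟨hpos, hsum⟩ := hr T1
  have hle1 : ∀ i : Fin n, r T1 i ≤ 1 := by
    intro i
    calc r T1 i ≤ ∑ k, r T1 k := Finset.single_le_sum (fun k _ => hpos k) (Finset.mem_univ i)
    _ = 1 := hsum
  have hsum3 : r T1 a + r T1 b + r T1 c ≤ 1 := by
    have hsub : ({a, b, c} : Finset (Fin n)) ⊆ univ := Finset.subset_univ _
    have h1 : ∑ k ∈ ({a, b, c} : Finset (Fin n)), r T1 k ≤ ∑ k, r T1 k :=
      Finset.sum_le_sum_of_subset_of_nonneg hsub (fun k _ _ => hpos k)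
    have h2 : ∑ k ∈ ({a, b, c} : Finset (Fin n)), r T1 k = r T1 a + r T1 b + r T1 c := by
      rw [Finset.sum_insert (by simp [hab, hac]), Finset.sum_insert (by simp [hbc]),
        Finset.sum_singleton]
      ring
    rw [h2] at h1
    rw [hsum] at h1
    exact h1
  -- the three 2-NM inequalities
  have ineq1 := hnm b a T1 Tb (Ne.symm hab) adjB hneB
  have ineq2 := hnm c b T1 Tc (Ne.symm hbc) adjC hneC
  have ineq3 := hnm a c T1 Ta hac adjA hneA
  rw [hza, hwb] at ineq1
  rw [hzb, hwc] at ineq2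
  rw [hzc, hwa] at ineq3
  rw [max_eq_right (by linarith [hle1 b, hpos a] : r T1 b - 1 ≤ r T1 a - 0)] at ineq1
  rw [max_eq_right (by linarith [hle1 c, hpos b] : r T1 c - 1 ≤ r T1 b - 0)] at ineq2
  rw [max_eq_right (by linarith [hle1 a, hpos c] : r T1 a - 1 ≤ r T1 c - 0)] at ineq3
  have key : 3 ≤ 2 * (r T1 a + r T1 b + r T1 c) + lam * (r T1 a + r T1 b + r T1 c) := by
    have := mul_le_mul_of_nonneg_left hsum3 hlam0
    nlinarith [ineq1, ineq2, ineq3]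
  nlinarith [hsum3, key, hlam0]
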